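/- The class of finitely discriminable groups is closed under extensions: if 1 → K → G → Q → 1 is exact with K and Q finitely discriminable, then G is finitely discriminable. -/

import Mathlib

/-- A group `G` is finitely discriminable if there is a finite subset
`F ⊆ G \ {1}` such that every non-trivial normal subgroup of `G` contains an
element of `F`. -/
def FinDisc (G : Type*) [Group G] : Prop :=
  ∃ F : Finset G, (1 : G) ∉ F ∧ ∀ N : Subgroup G, N.Normal → N ≠ ⊥ → ∃ g ∈ F, g ∈ N

open Subgroup

/-- inf of normal subgroups is normal -/
private lemma normal_inf' {G : Type*} [Group G] {A B : Subgroup G} (hA : A.Normal)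
    (hB : B.Normal) : (A ⊓ B).Normal :=
  ⟨fun n hn g => Subgroup.mem_inf.2
    ⟨hA.conj_mem n (Subgroup.mem_inf.1 hn).1 g, hB.conj_mem n (Subgroup.mem_inf.1 hn).2 g⟩⟩

private lemma centralizer_normal' {G : Type*} [Group G] (K : Subgroup G) [hK : K.Normal] :
    (Subgroup.centralizer (K : Set G)).Normal := by
  constructor
  intro c hc g
  rw [Subgroup.mem_centralizer_iff]
  intro k hk
  have h1 : g⁻¹ * k * g ∈ K := by
    have := hK.conj_mem k hk g⁻¹
    simpa [mul_assoc] using this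
  have h2 := Subgroup.mem_centralizer_iff.1 hc _ h1
  have h3 := congrArg (fun x => g * x * g⁻¹) h2
  simp only [mul_assoc] at h3 ⊢
  convert h3 using 1 <;> group

/-- torsion lemma: in a subgroup all of whose nontrivial subgroups meet a fixed
finite set, every element has finite order. -/
private lemma aux_torsion {G : Type*} [Group G] (A : Subgroup G) (FK : Finset G)
    (hFK1 : (1 : G) ∉ FK)
    (hA : ∀ S : Subgroup G, S ≤ A → S ≠ ⊥ → ∃ f ∈ FK, f ∈ S) :
    ∀ z ∈ A, IsOfFinOrder z := by
  intro z hz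
  by_contra hfin
  have hinj : Function.Injective fun n : ℤ => z ^ n :=
    injective_zpow_iff_not_isOfFinOrder.2 hfin
  have hEfin : ((fun n : ℤ => z ^ n) ⁻¹' (FK : Set G)).Finite :=
    Set.Finite.preimage hinj.injOn FK.finite_toSet
  set B := hEfin.toFinset.sup Int.natAbs with hB
  have hSle : Subgroup.zpowers (z ^ ((B : ℤ) + 1)) ≤ A := by
    rintro x hx
    obtain ⟨k, rfl⟩ := Subgroup.mem_zpowers_iff.1 hx
    exact A.zpow_mem (A.zpow_mem hz _) _
  have hSne : Subgroup.zpowers (z ^ ((B : ℤ) + 1)) ≠ ⊥ := by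
    rw [Ne, Subgroup.zpowers_eq_bot]
    intro h
    have : ((B : ℤ) + 1) = (0 : ℤ) := hinj (by simpa using h)
    omega
  obtain ⟨f, hfF, hfS⟩ := hA _ hSle hSne
  obtain ⟨k, hk⟩ := Subgroup.mem_zpowers_iff.1 hfS
  have hk0 : k ≠ 0 := by
    rintro rfl
    simp at hk
    exact hFK1 (hk ▸ hfF)
  have he : ((B : ℤ) + 1) * k ∈ (fun n : ℤ => z ^ n) ⁻¹' (FK : Set G) := by
    simp only [Set.mem_preimage, zpow_mul]
    rw [hk]
    exact hfF
  have hle := Finset.le_sup (f := Int.natAbs) (hEfin.mem_toFinset.2 he)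
  rw [← hB] at hle
  have : (((B : ℤ) + 1) * k).natAbs = (B + 1) * k.natAbs := by
    rw [Int.natAbs_mul]
    congr 1
  rw [this] at hle
  have : 1 ≤ k.natAbs := Nat.one_le_iff_ne_zero.2 (Int.natAbs_ne_zero.2 hk0)
  nlinarith

/-- p-torsion of such a subgroup is finite -/
private lemma aux_pfin {G : Type*} [Group G] (A : Subgroup G) (FK : Finset G)
    (hFK1 : (1 : G) ∉ FK)
    (hA : ∀ S : Subgroup G, S ≤ A → S ≠ ⊥ → ∃ f ∈ FK, f ∈ S)
    (p : ℕ) (hp : p.Prime) : {z : G | z ∈ A ∧ z ^ p = 1}.Finite := by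
  classical
  have hcover : {z : G | z ∈ A ∧ z ^ p = 1} ⊆
      insert (1 : G) (⋃ f ∈ (FK : Set G), {x : G | ∃ k : ℕ, k < p ∧ x = f ^ k}) := by
    rintro z ⟨hzA, hzp⟩
    by_cases hz1 : z = 1
    · exact Set.mem_insert_iff.2 (Or.inl hz1)
    refine Set.mem_insert_iff.2 (Or.inr ?_)
    haveI : Fact p.Prime := ⟨hp⟩
    have hoz : orderOf z = p := orderOf_eq_prime hzp hz1
    have hSle : Subgroup.zpowers z ≤ A := by
      rintro x hx
      obtain ⟨k, rfl⟩ := Subgroup.mem_zpowers_iff.1 hx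
      exact A.zpow_mem hzA _
    have hSne : Subgroup.zpowers z ≠ ⊥ := by
      rw [Ne, Subgroup.zpowers_eq_bot]; exact hz1
    obtain ⟨f, hfF, hfS⟩ := hA _ hSle hSne
    obtain ⟨k, hk⟩ := Subgroup.mem_zpowers_iff.1 hfS
    have hf1 : f ≠ 1 := fun h => hFK1 (h ▸ hfF)
    have hzpz : z ^ (p : ℤ) = 1 := by rw [zpow_natCast, hzp]
    -- p does not divide k
    have hpk : ¬ ((p : ℤ) ∣ k) := by
      rintro ⟨c, rfl⟩
      rw [zpow_mul, hzpz, one_zpow] at hk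
      exact hf1 hk.symm
    have hfp : f ^ (p : ℤ) = 1 := by
      rw [← hk, ← zpow_mul, mul_comm, zpow_mul, hzpz, one_zpow]
    -- Bezout: coprime
    have hcop : IsCoprime (k : ℤ) (p : ℤ) := by
      rw [Int.isCoprime_iff_gcd_eq_one]
      have : ¬ (p ∣ k.natAbs) := by
        intro h
        exact hpk (Int.natCast_dvd_natCast.2 h |>.trans (Int.natAbs_dvd.2 dvd_rfl))
      have := (Nat.Prime.coprime_iff_not_dvd hp).2 this
      unfold Int.gcd
      simpa [Nat.coprime_comm] using this
    obtain ⟨a, b, hab⟩ := hcop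
    have hzf : z = f ^ a * (z ^ (p : ℤ)) ^ b := by
      rw [← hk, ← zpow_mul, ← zpow_mul]
      rw [← zpow_add]
      rw [show k * a + (p : ℤ) * b = a * k + b * p by ring, hab, zpow_one]
    rw [hzpz, one_zpow, mul_one] at hzf
    -- reduce exponent a mod p
    have hppos : (0 : ℤ) < (p : ℤ) := by exact_mod_cast hp.pos
    have hmod : f ^ a = f ^ ((a % (p : ℤ)).toNat) := by
      conv_lhs => rw [← Int.mul_ediv_add_emod a (p : ℤ)]
      rw [zpow_add, zpow_mul, hfp, one_zpow, one_mul]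
      rw [← zpow_natCast, Int.toNat_of_nonneg (Int.emod_nonneg a (ne_of_gt hppos))]
    refine Set.mem_biUnion hfF ⟨(a % (p : ℤ)).toNat, ?_, by rw [hzf, hmod]⟩
    have := Int.emod_lt_of_pos a hppos
    have h0 := Int.emod_nonneg a (ne_of_gt hppos)
    omega
  refine Set.Finite.subset (Set.Finite.insert 1 ?_) hcover
  refine Set.Finite.biUnion FK.finite_toSet fun f _ => ?_
  have : {x : G | ∃ k : ℕ, k < p ∧ x = f ^ k} ⊆ (fun k : ℕ => f ^ k) '' (Set.Iio p) := by
    rintro x ⟨k, hk, rfl⟩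
    exact ⟨k, hk, rfl⟩
  exact Set.Finite.subset ((Set.finite_Iio p).image _) this


/-- every nontrivial normal subgroup of a finitely discriminable group contains
a minimal normal subgroup coming from a fixed finite family -/
private lemma exists_min_family {Q : Type*} [Group Q] (h2 : FinDisc Q) :
    ∃ 𝓜 : Finset (Subgroup Q), ∀ P : Subgroup Q, P.Normal → P ≠ ⊥ →
      ∃ M ∈ 𝓜, M ≤ P ∧ M.Normal ∧ M ≠ ⊥ ∧
        ∀ P' : Subgroup Q, P'.Normal → P' ≠ ⊥ → P' ≤ M → P' = M := by
  classical
  obtain ⟨F₂, hF1, hF⟩ := h2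
  refine ⟨F₂.image fun q => Subgroup.normalClosure {q}, ?_⟩
  intro P hPn hPb
  set T := (F₂.filter fun q => Subgroup.normalClosure {q} ≤ P).image
    (fun q => Subgroup.normalClosure {q}) with hT
  have hne : T.Nonempty := by
    obtain ⟨q, hq, hqP⟩ := hF P hPn hPb
    haveI := hPn
    exact ⟨_, Finset.mem_image_of_mem _ (Finset.mem_filter.2
      ⟨hq, Subgroup.normalClosure_le_normal (by simpa using hqP)⟩)⟩
  obtain ⟨Mm, hMm, hmin⟩ := Finset.exists_minimal hne
  obtain ⟨q₀, hq₀S, rfl⟩ := Finset.mem_image.1 hMm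
  have hq₀ := Finset.mem_filter.1 hq₀S
  have hq₀cl : q₀ ∈ Subgroup.normalClosure {q₀} :=
    Subgroup.subset_normalClosure (Set.mem_singleton _)
  refine ⟨_, Finset.mem_image_of_mem _ hq₀.1, hq₀.2, Subgroup.normalClosure_normal, ?_, ?_⟩
  · intro h
    rw [h] at hq₀cl
    exact hF1 ((Subgroup.mem_bot.1 hq₀cl) ▸ hq₀.1)
  · intro P' hP'n hP'b hP'le
    obtain ⟨q', hq', hq'P'⟩ := hF P' hP'n hP'b
    haveI := hP'n
    have hle' : Subgroup.normalClosure {q'} ≤ P' :=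
      Subgroup.normalClosure_le_normal (by simpa using hq'P')
    have hmem' : Subgroup.normalClosure {q'} ∈ T := by
      rw [hT]
      exact Finset.mem_image_of_mem _ (Finset.mem_filter.2
        ⟨hq', le_trans (le_trans hle' hP'le) hq₀.2⟩)
    have hnotlt : ¬ Subgroup.normalClosure {q'} < Subgroup.normalClosure {q₀} :=
        fun h => lt_irrefl _ (lt_of_lt_of_le h (hmin hmem' h.le))
    have heq : Subgroup.normalClosure {q'} = Subgroup.normalClosure {q₀} := by
      by_contra hne'
      exact hnotlt (lt_of_le_of_ne (le_trans hle' hP'le) hne')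
    exact le_antisymm hP'le (heq ▸ hle')

/-- transfer FinDisc of ↥K to a statement about subgroups of G contained in K -/
private lemma conv_FinDisc {G : Type*} [Group G] (K : Subgroup G) (h1 : FinDisc K) :
    ∃ FK : Finset G, (1 : G) ∉ FK ∧ ∀ S : Subgroup G, S ≠ ⊥ → S ≤ K →
      (∀ k ∈ K, ∀ s ∈ S, k * s * k⁻¹ ∈ S) → ∃ f ∈ FK, f ∈ S := by
  obtain ⟨F₁, hF1, hF⟩ := h1
  refine ⟨F₁.map ⟨Subtype.val, Subtype.val_injective⟩, ?_, ?_⟩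
  · intro h
    obtain ⟨a, ha, ha2⟩ := Finset.mem_map.1 h
    have : a = 1 := by
      apply Subtype.ext
      exact ha2
    exact hF1 (this ▸ ha)
  · intro S hSne hSK hSnorm
    have hnorm : (S.subgroupOf K).Normal := by
      constructor
      intro n hn g
      rw [Subgroup.mem_subgroupOf] at hn ⊢
      have := hSnorm g g.2 n hn
      simpa using this
    have hbot : S.subgroupOf K ≠ ⊥ := by
      obtain ⟨s, hs1⟩ := (Subgroup.ne_bot_iff_exists_ne_one).1 hSne
      rw [Subgroup.ne_bot_iff_exists_ne_one]
      refine ⟨⟨⟨(s : G), hSK s.2⟩, ?_⟩, ?_⟩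
      · rw [Subgroup.mem_subgroupOf]; exact s.2
      · intro h
        apply hs1
        apply Subtype.ext
        have := congrArg (Subtype.val) h
        simpa using this
    obtain ⟨f, hfF, hfS⟩ := hF _ hnorm hbot
    rw [Subgroup.mem_subgroupOf] at hfS
    exact ⟨(f : G), Finset.mem_map_of_mem _ hfF, hfS⟩

private lemma keyLemma {G : Type*} [Group G] (K : Subgroup G) [hK : K.Normal]
    (FK : Finset G) (hFK1 : (1 : G) ∉ FK)
    (hFK : ∀ S : Subgroup G, S ≠ ⊥ → S ≤ K → (∀ k ∈ K, ∀ s ∈ S, k * s * k⁻¹ ∈ S) →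
      ∃ f ∈ FK, f ∈ S)
    (M : Subgroup (G ⧸ K)) (hMn : M.Normal) (hMb : M ≠ ⊥)
    (hMmin : ∀ P : Subgroup (G ⧸ K), P.Normal → P ≠ ⊥ → P ≤ M → P = M) :
    ∃ Φ : Finset G, (1 : G) ∉ Φ ∧ ∀ N : Subgroup G, N.Normal → N ⊓ K = ⊥ →
      M ≤ N.map (QuotientGroup.mk' K) → ∃ g ∈ Φ, g ∈ N := by
  classical
  set π := QuotientGroup.mk' K with hπdef
  have hπs : Function.Surjective π := QuotientGroup.mk'_surjective K
  have hker : ∀ g : G, π g = 1 ↔ g ∈ K := fun g => QuotientGroup.eq_one_iff g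
  set C := Subgroup.centralizer (K : Set G) with hCdef
  have hCn : C.Normal := centralizer_normal' K
  have hcomm : ∀ k c : G, k ∈ K → c ∈ C → k * c = c * k := fun k c hk hc =>
    Subgroup.mem_centralizer_iff.1 hc k hk
  have hZdisc : ∀ S : Subgroup G, S ≤ C ⊓ K → S ≠ ⊥ → ∃ f ∈ FK, f ∈ S := by
    intro S hle hne
    refine hFK S hne (le_trans hle inf_le_right) ?_
    intro k hk s hs
    have h1 : k * s = s * k := hcomm k s hk (Subgroup.mem_inf.1 (hle hs)).1
    rw [h1]
    simpa [mul_assoc] using hs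
  have htors := aux_torsion (C ⊓ K) FK hFK1 hZdisc
  have hpfin := aux_pfin (C ⊓ K) FK hFK1 hZdisc
  set V := M.comap π with hVdef
  set U := C ⊓ V with hUdef
  have hUC : U ≤ C := inf_le_left
  have hUM : ∀ u ∈ U, π u ∈ M := fun u hu => Subgroup.mem_comap.1 (Subgroup.mem_inf.1 hu).2
  have hNC : ∀ N : Subgroup G, N.Normal → N ⊓ K = ⊥ → N ≤ C := by
    intro N hN hNK n hn
    rw [Subgroup.mem_centralizer_iff]
    intro k hk
    exact Subgroup.commute_of_normal_of_disjoint K N hK hN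
      (disjoint_iff.2 (by rw [inf_comm]; exact hNK)) k n hk hn
  have hNprime : ∀ N : Subgroup G, N.Normal → N ⊓ K = ⊥ → M ≤ N.map π →
      ((N ⊓ U).Normal ∧ (N ⊓ U) ⊓ K = ⊥) ∧ (N ⊓ U) ≤ U ∧ (N ⊓ U).map π = M := by
    intro N hNn hNK hML
    refine ⟨⟨normal_inf' hNn (normal_inf' hCn (hMn.comap π)), ?_⟩, inf_le_right, ?_⟩
    · rw [eq_bot_iff]
      intro x hx
      have hx' : x ∈ N ⊓ K := Subgroup.mem_inf.2
        ⟨(Subgroup.mem_inf.1 (Subgroup.mem_inf.1 hx).1).1, (Subgroup.mem_inf.1 hx).2⟩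
      rw [hNK] at hx'
      exact hx'
    · apply le_antisymm
      · intro m hm
        obtain ⟨x, hxNU, rfl⟩ := Subgroup.mem_map.1 hm
        exact hUM x (Subgroup.mem_inf.1 hxNU).2
      · intro m hm
        obtain ⟨n, hnN, rfl⟩ := Subgroup.mem_map.1 (hML hm)
        exact Subgroup.mem_map.2 ⟨n, Subgroup.mem_inf.2 ⟨hnN, Subgroup.mem_inf.2
          ⟨hNC N hNn hNK hnN, Subgroup.mem_comap.2 hm⟩⟩, rfl⟩
  by_cases hex : ∃ N₀ : Subgroup G, N₀.Normal ∧ (N₀ ⊓ K = ⊥ ∧ N₀ ≤ U) ∧ N₀.map π = M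
  case neg =>
    refine ⟨∅, by simp, ?_⟩
    intro N hNn hNK hML
    obtain ⟨⟨ha, hb⟩, hc, hd⟩ := hNprime N hNn hNK hML
    exact absurd ⟨N ⊓ U, ha, ⟨hb, hc⟩, hd⟩ hex
  case pos =>
  obtain ⟨N₀, hN₀n, ⟨hN₀K, hN₀U⟩, hN₀M⟩ := hex
  have hN₀C : N₀ ≤ C := le_trans hN₀U hUC
  have hN₀b : N₀ ≠ ⊥ := by
    intro h
    apply hMb
    rw [← hN₀M, h]
    exact Subgroup.map_bot π
  obtain ⟨x₀s, hx₀1⟩ := Subgroup.ne_bot_iff_exists_ne_one.1 hN₀b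
  have hx₀N₀ : (x₀s : G) ∈ N₀ := x₀s.2
  have hx₀1' : (x₀s : G) ≠ 1 := fun h => hx₀1 (Subtype.ext h)
  set x₀ : G := (x₀s : G) with hx₀def
  set P : Finset ℕ := FK.biUnion (fun f => (orderOf f).primeFactors) with hPdef
  set T : ℕ → Set G := fun p => {u : G | u ∈ U ∧ u ^ p = 1} with hTdef
  set Φ : Finset G := insert x₀
    (P.biUnion fun p => if h : (T p).Finite then h.toFinset.erase 1 else ∅) with hΦdef
  have hΦ1 : (1 : G) ∉ Φ := by
    rw [hΦdef]
    intro h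
    rcases Finset.mem_insert.1 h with h | h
    · exact hx₀1' h.symm
    · obtain ⟨p, hp, hmem⟩ := Finset.mem_biUnion.1 h
      split_ifs at hmem with hf
      · exact (Finset.mem_erase.1 hmem).1 rfl
      · simp at hmem
  refine ⟨Φ, hΦ1, ?_⟩
  intro N hNn hNK hML
  obtain ⟨⟨hN'n, hN'K⟩, hN'U, hN'M⟩ := hNprime N hNn hNK hML
  set N' := N ⊓ U with hN'def
  have hN'C : N' ≤ C := le_trans hN'U hUC
  by_cases heq : N' = N₀
  · refine ⟨x₀, by rw [hΦdef]; exact Finset.mem_insert_self _ _, ?_⟩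
    have hx : x₀ ∈ N' := by rw [heq]; exact hx₀N₀
    exact (inf_le_left : N ⊓ U ≤ N) hx
  · have hdisj : N' ⊓ N₀ = ⊥ := by
      have hDn : (N' ⊓ N₀).Normal := normal_inf' hN'n hN₀n
      by_cases hDbot : (N' ⊓ N₀).map π = ⊥
      · rw [eq_bot_iff]
        intro x hx
        have hπx : π x = 1 := by
          have hm : π x ∈ (N' ⊓ N₀).map π := Subgroup.mem_map.2 ⟨x, hx, rfl⟩
          rw [hDbot] at hm
          exact Subgroup.mem_bot.1 hm
        have hxK : x ∈ K := (hker x).1 hπx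
        have hx2 : x ∈ N' ⊓ K := Subgroup.mem_inf.2 ⟨(Subgroup.mem_inf.1 hx).1, hxK⟩
        rw [hN'K] at hx2
        exact hx2
      · exfalso
        have hmaple : (N' ⊓ N₀).map π ≤ M := by
          rw [← hN'M]
          exact Subgroup.map_mono inf_le_left
        have hDM := hMmin _ (hDn.map π hπs) hDbot hmaple
        have h1 : N' ≤ N₀ := by
          intro n hn
          have hm : π n ∈ (N' ⊓ N₀).map π := by
            rw [hDM, ← hN'M]
            exact Subgroup.mem_map.2 ⟨n, hn, rfl⟩
          obtain ⟨d, hd, hdn⟩ := Subgroup.mem_map.1 hm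
          have hnd : n * d⁻¹ ∈ N' ⊓ K := by
            refine Subgroup.mem_inf.2 ⟨mul_mem hn (inv_mem (Subgroup.mem_inf.1 hd).1), ?_⟩
            rw [← hker, map_mul, map_inv, hdn]
            simp
          rw [hN'K] at hnd
          have : n = d := mul_inv_eq_one.1 (Subgroup.mem_bot.1 hnd)
          rw [this]
          exact (Subgroup.mem_inf.1 hd).2
        have h2 : N₀ ≤ N' := by
          intro n hn
          have hm : π n ∈ (N' ⊓ N₀).map π := by
            rw [hDM, ← hN₀M]
            exact Subgroup.mem_map.2 ⟨n, hn, rfl⟩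
          obtain ⟨d, hd, hdn⟩ := Subgroup.mem_map.1 hm
          have hnd : n * d⁻¹ ∈ N₀ ⊓ K := by
            refine Subgroup.mem_inf.2 ⟨mul_mem hn (inv_mem (Subgroup.mem_inf.1 hd).2), ?_⟩
            rw [← hker, map_mul, map_inv, hdn]
            simp
          rw [hN₀K] at hnd
          have : n = d := mul_inv_eq_one.1 (Subgroup.mem_bot.1 hnd)
          rw [this]
          exact (Subgroup.mem_inf.1 hd).1
        exact heq (le_antisymm h1 h2)
    have huniq : ∀ n₁ n₂ m₁ m₂ : G, n₁ ∈ N' → n₂ ∈ N' → m₁ ∈ N₀ → m₂ ∈ N₀ →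
        n₁ * m₁⁻¹ = n₂ * m₂⁻¹ → n₁ = n₂ ∧ m₁ = m₂ := by
      intro n₁ n₂ m₁ m₂ h1 h2 h3 h4 h5
      have e1 : n₂⁻¹ * n₁ = m₂⁻¹ * m₁ := by
        have h6 : n₂⁻¹ * (n₁ * m₁⁻¹) * m₁ = n₂⁻¹ * (n₂ * m₂⁻¹) * m₁ := by rw [h5]
        calc n₂⁻¹ * n₁ = n₂⁻¹ * (n₁ * m₁⁻¹) * m₁ := by group
        _ = n₂⁻¹ * (n₂ * m₂⁻¹) * m₁ := h6
        _ = m₂⁻¹ * m₁ := by group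
      have hmem : n₂⁻¹ * n₁ ∈ N' ⊓ N₀ := Subgroup.mem_inf.2
        ⟨mul_mem (inv_mem h2) h1, e1 ▸ mul_mem (inv_mem h4) h3⟩
      rw [hdisj] at hmem
      have hone := Subgroup.mem_bot.1 hmem
      have hn12 : n₁ = n₂ := (inv_mul_eq_one.1 hone).symm
      refine ⟨hn12, ?_⟩
      rw [e1] at hone
      exact (inv_mul_eq_one.1 hone).symm
    -- the subgroup S of "differences"
    have hmulS : ∀ g₁ g₂ : G,
        (∃ n m : G, n ∈ N' ∧ m ∈ N₀ ∧ g₁ = n * m⁻¹ ∧ π n = π m) →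
        (∃ n m : G, n ∈ N' ∧ m ∈ N₀ ∧ g₂ = n * m⁻¹ ∧ π n = π m) →
        (∃ n m : G, n ∈ N' ∧ m ∈ N₀ ∧ g₁ * g₂ = n * m⁻¹ ∧ π n = π m) := by
      rintro g₁ g₂ ⟨n₁, m₁, hn₁, hm₁, rfl, hπ₁⟩ ⟨n₂, m₂, hn₂, hm₂, rfl, hπ₂⟩
      refine ⟨n₂ * n₁, m₂ * m₁, mul_mem hn₂ hn₁, mul_mem hm₂ hm₁, ?_, by
        rw [map_mul, map_mul, hπ₁, hπ₂]⟩
      have hg₁K : n₁ * m₁⁻¹ ∈ K := by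
        rw [← hker, map_mul, map_inv, hπ₁]
        simp
      have hc : (n₁ * m₁⁻¹) * n₂ = n₂ * (n₁ * m₁⁻¹) := hcomm _ _ hg₁K (hN'C hn₂)
      calc (n₁ * m₁⁻¹) * (n₂ * m₂⁻¹) = ((n₁ * m₁⁻¹) * n₂) * m₂⁻¹ := by group
      _ = (n₂ * (n₁ * m₁⁻¹)) * m₂⁻¹ := by rw [hc]
      _ = (n₂ * n₁) * (m₂ * m₁)⁻¹ := by group
    have hinvS : ∀ g : G,
        (∃ n m : G, n ∈ N' ∧ m ∈ N₀ ∧ g = n * m⁻¹ ∧ π n = π m) →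
        (∃ n m : G, n ∈ N' ∧ m ∈ N₀ ∧ g⁻¹ = n * m⁻¹ ∧ π n = π m) := by
      rintro g ⟨n, m, hn, hm, rfl, hπ1⟩
      refine ⟨n⁻¹, m⁻¹, inv_mem hn, inv_mem hm, ?_, by rw [map_inv, map_inv, hπ1]⟩
      have hgK : n * m⁻¹ ∈ K := by
        rw [← hker, map_mul, map_inv, hπ1]
        simp
      have hc : (n * m⁻¹) * n = n * (n * m⁻¹) := hcomm _ _ hgK (hN'C hn)
      have hc2 : m⁻¹ * n = n * m⁻¹ := by
        have := hc
        rw [mul_assoc] at this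
        exact mul_left_cancel this
      rw [← hc2, mul_inv_rev]
    set S : Subgroup G :=
      { carrier := {g : G | ∃ n m : G, n ∈ N' ∧ m ∈ N₀ ∧ g = n * m⁻¹ ∧ π n = π m}
        one_mem' := ⟨1, 1, one_mem _, one_mem _, by group, rfl⟩
        mul_mem' := fun {a b} ha hb => hmulS a b ha hb
        inv_mem' := fun {a} ha => hinvS a ha } with hSdef
    have hSmem : ∀ g : G, g ∈ S ↔
        ∃ n m : G, n ∈ N' ∧ m ∈ N₀ ∧ g = n * m⁻¹ ∧ π n = π m := fun g => Iff.rfl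
    have hSle : S ≤ C ⊓ K := by
      intro g hg
      obtain ⟨n, m, hn, hm, rfl, hπ1⟩ := (hSmem g).1 hg
      refine Subgroup.mem_inf.2 ⟨mul_mem (hN'C hn) (inv_mem (hN₀C hm)), ?_⟩
      rw [← hker, map_mul, map_inv, hπ1]
      simp
    have hSne : S ≠ ⊥ := by
      intro hSbot
      apply heq
      apply le_antisymm
      · intro n hn
        have hπn : π n ∈ N₀.map π := by
          rw [hN₀M, ← hN'M]
          exact Subgroup.mem_map.2 ⟨n, hn, rfl⟩
        obtain ⟨m, hm, hmn⟩ := Subgroup.mem_map.1 hπn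
        have hs : n * m⁻¹ ∈ S := (hSmem _).2 ⟨n, m, hn, hm, rfl, hmn.symm⟩
        rw [hSbot] at hs
        have : n = m := mul_inv_eq_one.1 (Subgroup.mem_bot.1 hs)
        rw [this]
        exact hm
      · intro m hm
        have hπm : π m ∈ N'.map π := by
          rw [hN'M, ← hN₀M]
          exact Subgroup.mem_map.2 ⟨m, hm, rfl⟩
        obtain ⟨n, hn, hnm⟩ := Subgroup.mem_map.1 hπm
        have hs : n * m⁻¹ ∈ S := (hSmem _).2 ⟨n, m, hn, hm, rfl, hnm⟩
        rw [hSbot] at hs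
        have : n = m := mul_inv_eq_one.1 (Subgroup.mem_bot.1 hs)
        rw [← this]
        exact hn
    obtain ⟨f, hfFK, hfS⟩ := hZdisc S hSle hSne
    have hfCK : f ∈ C ⊓ K := hSle hfS
    have hfK : f ∈ K := (Subgroup.mem_inf.1 hfCK).2
    obtain ⟨n, m, hnN', hmN₀, hf, hπnm⟩ := (hSmem f).1 hfS
    have hf1 : f ≠ 1 := fun h => hFK1 (h ▸ hfFK)
    have hford : IsOfFinOrder f := htors f hfCK
    have hd0 : orderOf f ≠ 0 := fun h => (orderOf_eq_zero_iff.1 h) hford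
    have hd1 : orderOf f ≠ 1 := fun h => hf1 (orderOf_eq_one_iff.1 h)
    set p := (orderOf f).minFac with hpdef
    have hpp : p.Prime := Nat.minFac_prime hd1
    have hpd : p ∣ orderOf f := Nat.minFac_dvd _
    have hpP : p ∈ P := by
      rw [hPdef]
      exact Finset.mem_biUnion.2 ⟨f, hfFK, Nat.mem_primeFactors.2 ⟨hpp, hpd, hd0⟩⟩
    set e := orderOf f / p with hedef
    have hep : e * p = orderOf f := Nat.div_mul_cancel hpd
    have he0 : e ≠ 0 := fun h => hd0 (by rw [← hep, h, zero_mul])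
    have hfn : f * n = n * f := hcomm f n hfK (hN'C hnN')
    have hfm : f * m = m * f := hcomm f m hfK (hN₀C hmN₀)
    have hnfm : n = f * m := by rw [hf]; group
    have hnpow : ∀ j : ℕ, n ^ j = f ^ j * m ^ j := fun j => by
      rw [hnfm]
      exact (show Commute f m from hfm).mul_pow j
    have hf'eq : n ^ e * (m ^ e)⁻¹ = f ^ e := by
      rw [hnpow e]
      group
    have hof' : orderOf (f ^ e) = p := by
      rw [orderOf_pow' f he0, hedef, Nat.gcd_eq_right (Nat.div_dvd_of_dvd hpd),
        Nat.div_div_self hpd hd0]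
    have hf'1 : f ^ e ≠ 1 := by
      intro h
      rw [h, orderOf_one] at hof'
      exact hpp.one_lt.ne hof'
    have hn'N' : n ^ e ∈ N' := pow_mem hnN' e
    have hm'N₀ : m ^ e ∈ N₀ := pow_mem hmN₀ e
    have hn'1 : n ^ e ≠ 1 := by
      intro h
      rw [h, one_mul] at hf'eq
      have hm'K : m ^ e ∈ K := by
        have h2 : f ^ e ∈ K := K.pow_mem hfK e
        rw [← hf'eq] at h2
        exact (Subgroup.inv_mem_iff K).1 h2
      have hmm : m ^ e ∈ N₀ ⊓ K := Subgroup.mem_inf.2 ⟨hm'N₀, hm'K⟩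
      rw [hN₀K] at hmm
      apply hf'1
      rw [← hf'eq, Subgroup.mem_bot.1 hmm]
      simp
    have hn'p : (n ^ e) ^ p = 1 := by
      have h1 : (n ^ e) ^ p = f ^ (orderOf f) * (m ^ e) ^ p := by
        rw [← pow_mul, ← pow_mul, hnpow (e * p), hep]
      rw [pow_orderOf_eq_one, one_mul] at h1
      have hmm : (n ^ e) ^ p ∈ N' ⊓ N₀ := Subgroup.mem_inf.2
        ⟨pow_mem hn'N' p, h1 ▸ pow_mem hm'N₀ p⟩
      rw [hdisj] at hmm
      exact Subgroup.mem_bot.1 hmm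
    have hTp : (T p).Finite := by
      have hch : ∀ u : G, ∃ nm : G × G, u ∈ U →
          nm.1 ∈ N' ∧ nm.2 ∈ N₀ ∧ π nm.1 = π u ∧ π nm.2 = π u := by
        intro u
        by_cases hu : u ∈ U
        · have hπu1 : π u ∈ N'.map π := by rw [hN'M]; exact hUM u hu
          have hπu2 : π u ∈ N₀.map π := by rw [hN₀M]; exact hUM u hu
          obtain ⟨a, ha, hag⟩ := Subgroup.mem_map.1 hπu1
          obtain ⟨b, hb, hbg⟩ := Subgroup.mem_map.1 hπu2
          exact ⟨(a, b), fun _ => ⟨ha, hb, hag, hbg⟩⟩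
        · exact ⟨(1, 1), fun h => absurd h hu⟩
      choose nm hnm using hch
      apply Set.Finite.of_finite_image
        (f := fun u => (u * ((nm u).2)⁻¹, (nm u).1 * ((nm u).2)⁻¹))
      · apply Set.Finite.subset (Set.Finite.prod (hpfin p hpp) (hpfin p hpp))
        rintro - ⟨u, hu, rfl⟩
        obtain ⟨huU, hup⟩ := hu
        obtain ⟨hνN', hμN₀, hνπ, hμπ⟩ := hnm u huU
        have huC : u ∈ C := hUC huU
        have hνC : (nm u).1 ∈ C := hN'C hνN'
        have hμC : (nm u).2 ∈ C := hN₀C hμN₀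
        have hz₁K : u * ((nm u).2)⁻¹ ∈ K := by
          rw [← hker, map_mul, map_inv, hμπ]
          simp
        have hwK : (nm u).1 * ((nm u).2)⁻¹ ∈ K := by
          rw [← hker, map_mul, map_inv, hνπ, hμπ]
          simp
        have hcz : (u * ((nm u).2)⁻¹) * ((nm u).2) = ((nm u).2) * (u * ((nm u).2)⁻¹) :=
          hcomm _ _ hz₁K hμC
        have hupow : u ^ p = (u * ((nm u).2)⁻¹) ^ p * ((nm u).2) ^ p := by
          have h := (show Commute (u * ((nm u).2)⁻¹) ((nm u).2) from hcz).mul_pow p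
          rw [← h]
          congr 1
          group
        have h1 : (u * ((nm u).2)⁻¹) ^ p * ((nm u).2) ^ p = 1 := by rw [← hupow, hup]
        have hμpK : ((nm u).2) ^ p ∈ K := by
          have h2 : ((nm u).2) ^ p = ((u * ((nm u).2)⁻¹) ^ p)⁻¹ :=
            eq_inv_of_mul_eq_one_right h1
          rw [h2]
          exact K.inv_mem (K.pow_mem hz₁K p)
        have hμmem : ((nm u).2) ^ p ∈ N₀ ⊓ K := Subgroup.mem_inf.2 ⟨pow_mem hμN₀ p, hμpK⟩
        rw [hN₀K] at hμmem
        have hμp1 : ((nm u).2) ^ p = 1 := Subgroup.mem_bot.1 hμmem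
        have hz₁p : (u * ((nm u).2)⁻¹) ^ p = 1 := by
          rw [hμp1, mul_one] at h1
          exact h1
        have hcw : ((nm u).1 * ((nm u).2)⁻¹) * ((nm u).2) =
            ((nm u).2) * ((nm u).1 * ((nm u).2)⁻¹) := hcomm _ _ hwK hμC
        have hνpow : ((nm u).1) ^ p = ((nm u).1 * ((nm u).2)⁻¹) ^ p * ((nm u).2) ^ p := by
          have h := (show Commute ((nm u).1 * ((nm u).2)⁻¹) ((nm u).2) from hcw).mul_pow p
          rw [← h]
          congr 1
          group
        have hνpK : ((nm u).1) ^ p ∈ K := by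
          rw [← hker, map_pow, hνπ, ← map_pow, hup, map_one]
        have hνp1 : ((nm u).1) ^ p = 1 := by
          have hmm : ((nm u).1) ^ p ∈ N' ⊓ K := Subgroup.mem_inf.2 ⟨pow_mem hνN' p, hνpK⟩
          rw [hN'K] at hmm
          exact Subgroup.mem_bot.1 hmm
        have hwp : ((nm u).1 * ((nm u).2)⁻¹) ^ p = 1 := by
          rw [hνp1, hμp1, mul_one] at hνpow
          exact hνpow.symm
        exact ⟨⟨Subgroup.mem_inf.2 ⟨mul_mem huC (inv_mem hμC), hz₁K⟩, hz₁p⟩,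
          ⟨Subgroup.mem_inf.2 ⟨mul_mem hνC (inv_mem hμC), hwK⟩, hwp⟩⟩
      · rintro u₁ hu₁ u₂ hu₂ hpair
        obtain ⟨hu₁U, -⟩ := hu₁
        obtain ⟨hu₂U, -⟩ := hu₂
        obtain ⟨hν₁, hμ₁, -, -⟩ := hnm u₁ hu₁U
        obtain ⟨hν₂, hμ₂, -, -⟩ := hnm u₂ hu₂U
        have h2 : (nm u₁).1 * ((nm u₁).2)⁻¹ = (nm u₂).1 * ((nm u₂).2)⁻¹ :=
          congrArg Prod.snd hpair
        have h1 : u₁ * ((nm u₁).2)⁻¹ = u₂ * ((nm u₂).2)⁻¹ := congrArg Prod.fst hpair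
        obtain ⟨-, hμeq⟩ := huniq _ _ _ _ hν₁ hν₂ hμ₁ hμ₂ h2
        rw [hμeq] at h1
        exact mul_right_cancel h1
    refine ⟨n ^ e, ?_, ?_⟩
    · rw [hΦdef]
      refine Finset.mem_insert_of_mem (Finset.mem_biUnion.2 ⟨p, hpP, ?_⟩)
      rw [dif_pos hTp]
      exact Finset.mem_erase.2 ⟨hn'1, hTp.mem_toFinset.2 ⟨hN'U hn'N', hn'p⟩⟩
    · exact (inf_le_left : N ⊓ U ≤ N) hn'N'

/-- The class of finitely discriminable groups is closed under extensions: if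
`K ⊴ G` with both `K` and `G/K` finitely discriminable, then so is `G`. -/
theorem finDisc_of_extension {G : Type*} [Group G] (K : Subgroup G)
    [hK : K.Normal] (h1 : FinDisc K) (h2 : FinDisc (G ⧸ K)) : FinDisc G := by
  classical
  obtain ⟨FK, hFK1, hFK⟩ := conv_FinDisc K h1
  obtain ⟨𝓜, h𝓜⟩ := exists_min_family h2
  set π := QuotientGroup.mk' K with hπdef
  set Φf : Subgroup (G ⧸ K) → Finset G := fun M =>
    if h : M.Normal ∧ M ≠ ⊥ ∧ (∀ P : Subgroup (G ⧸ K), P.Normal → P ≠ ⊥ → P ≤ M → P = M)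
    then (keyLemma K FK hFK1 hFK M h.1 h.2.1 h.2.2).choose else ∅ with hΦf
  refine ⟨FK ∪ 𝓜.biUnion Φf, ?_, ?_⟩
  · intro h
    rcases Finset.mem_union.1 h with h | h
    · exact hFK1 h
    · obtain ⟨M, hM, hmem⟩ := Finset.mem_biUnion.1 h
      revert hmem
      show 1 ∉ Φf M
      simp only [hΦf]
      split_ifs with hc
      · exact (keyLemma K FK hFK1 hFK M hc.1 hc.2.1 hc.2.2).choose_spec.1
      · simp
  · intro N hNn hNb
    by_cases hNK : N ⊓ K = ⊥
    · have hPn : (N.map π).Normal := hNn.map π (QuotientGroup.mk'_surjective K)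
      have hPb : N.map π ≠ ⊥ := by
        intro h
        apply hNb
        rw [eq_bot_iff]
        intro x hx
        have hπx : π x ∈ N.map π := Subgroup.mem_map.2 ⟨x, hx, rfl⟩
        rw [h] at hπx
        have hxK : x ∈ K := (QuotientGroup.eq_one_iff x).1 (Subgroup.mem_bot.1 hπx)
        have : x ∈ N ⊓ K := Subgroup.mem_inf.2 ⟨hx, hxK⟩
        rw [hNK] at this
        exact this
      obtain ⟨M, hM𝓜, hMle, hMn, hMb, hMmin⟩ := h𝓜 _ hPn hPb
      have hcond : M.Normal ∧ M ≠ ⊥ ∧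
          (∀ P : Subgroup (G ⧸ K), P.Normal → P ≠ ⊥ → P ≤ M → P = M) := ⟨hMn, hMb, hMmin⟩
      have hspec := (keyLemma K FK hFK1 hFK M hcond.1 hcond.2.1 hcond.2.2).choose_spec
      obtain ⟨g, hgΦ, hgN⟩ := hspec.2 N hNn hNK hMle
      refine ⟨g, Finset.mem_union_right _ (Finset.mem_biUnion.2 ⟨M, hM𝓜, ?_⟩), hgN⟩
      show g ∈ Φf M
      simp only [hΦf]
      rw [dif_pos hcond]
      exact hgΦ
    · have hnorm : ∀ k ∈ K, ∀ s ∈ N ⊓ K, k * s * k⁻¹ ∈ N ⊓ K := by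
        intro k hk s hs
        refine Subgroup.mem_inf.2 ⟨hNn.conj_mem s (Subgroup.mem_inf.1 hs).1 k, ?_⟩
        exact mul_mem (mul_mem hk (Subgroup.mem_inf.1 hs).2) (inv_mem hk)
      obtain ⟨f, hfF, hfN⟩ := hFK (N ⊓ K) hNK inf_le_right hnorm
      exact ⟨f, Finset.mem_union_left _ hfF, (Subgroup.mem_inf.1 hfN).1⟩
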